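/- For every m-ary function f : T^n → T, the sensitivity satisfies s(f) ≤ 2·(m-1)^3·deg(f)^2. -/

import Mathlib

open scoped Classical

noncomputable section

/-- `F` represents the `m`-ary function `f : T^n → T` if it agrees with `f` on `T^n`. -/
def Represents (T : Finset ℂ) (n : ℕ) (F : MvPolynomial (Fin n) ℂ)
    (f : (Fin n → ↥T) → ↥T) : Prop :=
  ∀ x : Fin n → ↥T, MvPolynomial.eval (fun i => (x i : ℂ)) F = (f x : ℂ)

/-- The degree of an `m`-ary function: the minimum total degree of a representing polynomial. -/
def degreeF (T : Finset ℂ) (n : ℕ) (f : (Fin n → ↥T) → ↥T) : ℕ :=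
  sInf {d | ∃ F : MvPolynomial (Fin n) ℂ, Represents T n F f ∧ F.totalDegree = d}

/-- Local sensitivity of `f` at `x`: the number of `y` differing from `x` in exactly one
entry with `f y ≠ f x`. -/
def localSens (T : Finset ℂ) (n : ℕ) (f : (Fin n → ↥T) → ↥T) (x : Fin n → ↥T) : ℕ :=
  (Finset.univ.filter fun y : Fin n → ↥T => hammingDist x y = 1 ∧ f y ≠ f x).card

/-- Sensitivity of `f`. -/
def sens (T : Finset ℂ) (n : ℕ) (f : (Fin n → ↥T) → ↥T) : ℕ :=
  Finset.univ.sup (localSens T n f)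

namespace SensDeg
open Finset Polynomial




/-! ### Elementary product identities over ℕ -/

lemma prod_range_add_one (n : ℕ) : ∏ i ∈ range n, (i + 1) = n.factorial := by
  induction n with
  | zero => simp
  | succ n ih => rw [prod_range_succ, ih, Nat.factorial_succ, mul_comm]

lemma prod_range_sub (j : ℕ) : ∏ i ∈ range j, (j - i) = j.factorial := by
  rw [← Nat.descFactorial_eq_prod_range, Nat.descFactorial_self]

lemma prod_Ico_sub (j D : ℕ) : ∏ i ∈ Ico (j+1) (D+1), (i - j) = (D - j).factorial := by
  rw [prod_Ico_eq_prod_range]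
  have h1 : D + 1 - (j + 1) = D - j := by omega
  rw [h1, ← prod_range_add_one (D - j)]
  exact Finset.prod_congr rfl fun k _ => by omega

lemma prod_range_add (j : ℕ) (hj : 1 ≤ j) :
    (j - 1).factorial * (2 * j) * ∏ i ∈ range j, (j + i) = (2 * j).factorial := by
  obtain ⟨l, rfl⟩ : ∃ l, j = l + 1 := ⟨j - 1, by omega⟩
  have e1 : ∏ i ∈ range (l+1), (l + 1 + i) = ∏ i ∈ Ico (l+1) (2*l+2), i := by
    rw [prod_Ico_eq_prod_range]
    have : 2*l+2 - (l+1) = l+1 := by omega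
    rw [this]
  have e2 : ∏ i ∈ Ico 1 (l+1), i = l.factorial := Finset.prod_Ico_id_eq_factorial l
  have e3 : ∏ i ∈ Ico 1 (2*l+2), i = (2*l+1).factorial := Finset.prod_Ico_id_eq_factorial (2*l+1)
  have e4 : (∏ i ∈ Ico 1 (l+1), i) * (∏ i ∈ Ico (l+1) (2*l+2), i) = ∏ i ∈ Ico 1 (2*l+2), i :=
    Finset.prod_Ico_consecutive _ (by omega) (by omega)
  have hsub : l + 1 - 1 = l := by omega
  rw [hsub, e1]
  have : (2*(l+1)) = 2*l+2 := by ring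
  rw [this]
  have : (2*l+2).factorial = (2*l+2) * (2*l+1).factorial := Nat.factorial_succ (2*l+1)
  rw [this, ← e3, ← e4, e2]
  ring

lemma prod_Ico_add (j D : ℕ) (hj : 1 ≤ j) (hjD : j ≤ D) :
    (2 * j).factorial * ∏ i ∈ Ico (j+1) (D+1), (i + j) = (D + j).factorial := by
  have e1 : ∏ i ∈ Ico (j+1) (D+1), (i + j) = ∏ i ∈ Ico (2*j+1) (D+j+1), i := by
    rw [prod_Ico_eq_prod_range, prod_Ico_eq_prod_range]
    have h1 : D + 1 - (j + 1) = D - j := by omega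
    have h2 : D + j + 1 - (2*j+1) = D - j := by omega
    rw [h1, h2]
    exact Finset.prod_congr rfl fun k _ => by omega
  have e2 : ∏ i ∈ Ico 1 (2*j+1), i = (2*j).factorial := Finset.prod_Ico_id_eq_factorial (2*j)
  have e3 : ∏ i ∈ Ico 1 (D+j+1), i = (D+j).factorial := Finset.prod_Ico_id_eq_factorial (D+j)
  have e4 : (∏ i ∈ Ico 1 (2*j+1), i) * (∏ i ∈ Ico (2*j+1) (D+j+1), i) = ∏ i ∈ Ico 1 (D+j+1), i :=
    Finset.prod_Ico_consecutive _ (by omega) (by omega)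
  rw [e1, ← e3, ← e4, e2]

lemma factorial_sq_le (j D : ℕ) (hjD : j ≤ D) :
    D.factorial * D.factorial ≤ (D - j).factorial * (D + j).factorial := by
  have h1 : (D - j).factorial * D.descFactorial j = D.factorial :=
    Nat.factorial_mul_descFactorial hjD
  have h2 : (D + j - j).factorial * (D + j).descFactorial j = (D + j).factorial :=
    Nat.factorial_mul_descFactorial (by omega)
  have h3 : D + j - j = D := by omega
  rw [h3] at h2
  calc D.factorial * D.factorial = (D - j).factorial * (D.descFactorial j * D.factorial) := by
        rw [← h1]; ring
    _ ≤ (D - j).factorial * ((D + j).descFactorial j * D.factorial) := by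
        have := Nat.descFactorial_le j (show D ≤ D + j by omega)
        exact Nat.mul_le_mul_left _ (Nat.mul_le_mul_right _ this)
    _ = (D - j).factorial * (D + j).factorial := by rw [← h2]; ring

/-! ### Sum bounds -/

lemma sum_inv_sq_le (D : ℕ) (hD : 1 ≤ D) :
    ∑ i ∈ Ico 1 (D+1), 1 / (2 * (i:ℝ)^2) ≤ 1 - 1/(2*(D:ℝ)) := by
  induction D with
  | zero => omega
  | succ D ih =>
    rcases Nat.eq_or_lt_of_le hD with h | h
    · simp only [← h]; norm_num
    · have hD' : 1 ≤ D := by omega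
      rw [Finset.sum_Ico_succ_top (by omega : 1 ≤ D + 1)]
      have hDpos : (0:ℝ) < D := by exact_mod_cast hD'
      have key : 1 / (2 * ((D:ℝ)+1)^2) ≤ 1/(2*(D:ℝ)) - 1/(2*((D:ℝ)+1)) := by
        rw [div_sub_div _ _ (by positivity) (by positivity)]
        rw [div_le_div_iff₀ (by positivity) (by positivity)]
        ring_nf
        nlinarith [hDpos]
      have := ih hD'
      push_cast
      push_cast at this
      linarith

lemma sum_inv_le (D : ℕ) (hD : 1 ≤ D) :
    ∑ j ∈ Ico 1 (D+1), 1 / (2 * (j:ℝ)^2 + 1) ≤ 2/3 - (2/3)/((D:ℝ)+1) := by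
  induction D with
  | zero => omega
  | succ D ih =>
    rcases Nat.eq_or_lt_of_le hD with h | h
    · simp only [← h]; norm_num
    · have hD' : 1 ≤ D := by omega
      rw [Finset.sum_Ico_succ_top (by omega : 1 ≤ D + 1)]
      have hDpos : (0:ℝ) < D := by exact_mod_cast hD'
      have key : 1 / (2 * ((D:ℝ)+1)^2 + 1) ≤ (2/3)/((D:ℝ)+1) - (2/3)/((D:ℝ)+1+1) := by
        rw [div_sub_div _ _ (by positivity) (by positivity)]
        rw [div_le_div_iff₀ (by positivity) (by positivity)]
        ring_nf
        have hD1 : (1:ℝ) ≤ D := by exact_mod_cast hD'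
        nlinarith [hD1]
      have := ih hD'
      push_cast
      push_cast at this
      linarith

/-! ### The node function -/

/-- the nodes `2 j² + 1` as reals -/
private def nd (j : ℕ) : ℝ := 2 * (j:ℝ)^2 + 1

lemma nd_cast (j : ℕ) : nd j = ((2*j^2 + 1 : ℕ) : ℝ) := by unfold nd; push_cast; ring

lemma nd_pos (j : ℕ) : 0 < nd j := by unfold nd; positivity

lemma nd_strictMono {i j : ℕ} (h : i < j) : nd i < nd j := by
  unfold nd
  have : (i:ℝ) < j := by exact_mod_cast h
  have h0 : (0:ℝ) ≤ i := by positivity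
  nlinarith

lemma nd_injOn (D : ℕ) : Set.InjOn nd (range (D+1) : Finset ℕ) := by
  intro a _ b _ hab
  rcases lt_trichotomy a b with h | h | h
  · exact absurd hab (ne_of_lt (nd_strictMono h))
  · exact h
  · exact absurd hab.symm (ne_of_lt (nd_strictMono h))

lemma erase_split {j D : ℕ} (hj : j ≤ D) :
    (range (D+1)).erase j = (range j) ∪ (Ico (j+1) (D+1)) := by
  ext i
  simp only [mem_erase, mem_range, mem_union, mem_Ico]
  omega

lemma erase_disj (j D : ℕ) : Disjoint (range j) (Ico (j+1) (D+1)) := by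
  rw [Finset.disjoint_left]
  intro i hi hi'
  simp only [mem_range] at hi
  simp only [mem_Ico] at hi'
  omega

/-- the Lagrange basis value at 0 -/
private noncomputable def β (D j : ℕ) : ℝ := Polynomial.eval 0 (Lagrange.basis (range (D+1)) nd j)

lemma β_eq (D j : ℕ) :
    β D j = ∏ i ∈ (range (D+1)).erase j, ((nd j - nd i)⁻¹ * (0 - nd i)) := by
  unfold β Lagrange.basis
  rw [Polynomial.eval_prod]
  exact Finset.prod_congr rfl fun i _ => by
    unfold Lagrange.basisDivisor
    simp

lemma β_zero_eq (D : ℕ) :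
    β D 0 = ∏ i ∈ Ico 1 (D+1), (1 + 1/(2 * (i:ℝ)^2)) := by
  rw [β_eq]
  have h0 : (range (D+1)).erase 0 = Ico 1 (D+1) := by
    ext i; simp only [mem_erase, mem_range, mem_Ico]; omega
  rw [h0]
  refine Finset.prod_congr rfl fun i hi => ?_
  simp only [mem_Ico] at hi
  have hi1 : 1 ≤ i := hi.1
  have hipos : (0:ℝ) < (i:ℝ)^2 := by
    have : (1:ℝ) ≤ i := by exact_mod_cast hi1
    positivity
  unfold nd
  have h1 : (2 * (0:ℕ)^2 + 1 : ℝ) - (2*(i:ℝ)^2+1) = -(2*(i:ℝ)^2) := by push_cast; ring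
  field_simp
  ring

lemma β_zero_pos (D : ℕ) : 0 < β D 0 := by
  rw [β_zero_eq]
  apply Finset.prod_pos
  intro i hi
  simp only [mem_Ico] at hi
  have : (1:ℝ) ≤ i := by exact_mod_cast hi.1
  have : (0:ℝ) < (i:ℝ)^2 := by positivity
  have : 0 < 2*(i:ℝ)^2 := by linarith
  have := one_div_pos.mpr this
  linarith

lemma β_zero_lt_three (D : ℕ) (hD : 1 ≤ D) : β D 0 < 3 := by
  rw [β_zero_eq]
  have step : ∀ i ∈ Ico 1 (D+1), (1 + 1/(2 * (i:ℝ)^2)) ≤ Real.exp (1/(2 * (i:ℝ)^2)) := by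
    intro i hi
    have := Real.add_one_le_exp (1/(2 * (i:ℝ)^2))
    linarith
  calc ∏ i ∈ Ico 1 (D+1), (1 + 1/(2 * (i:ℝ)^2))
      ≤ ∏ i ∈ Ico 1 (D+1), Real.exp (1/(2 * (i:ℝ)^2)) := by
        apply Finset.prod_le_prod
        · intro i hi
          simp only [mem_Ico] at hi
          have : (1:ℝ) ≤ i := by exact_mod_cast hi.1
          positivity
        · exact step
    _ = Real.exp (∑ i ∈ Ico 1 (D+1), 1/(2 * (i:ℝ)^2)) := by rw [Real.exp_sum]
    _ ≤ Real.exp 1 := by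
        apply Real.exp_le_exp.mpr
        have := sum_inv_sq_le D hD
        have hDpos : (0:ℝ) < D := by exact_mod_cast hD
        have : (0:ℝ) < 1/(2*(D:ℝ)) := by positivity
        linarith [sum_inv_sq_le D hD]
    _ < 3 := by linarith [Real.exp_one_lt_d9]

lemma nd_ne {i j : ℕ} (h : i ≠ j) : nd j - nd i ≠ 0 := by
  rcases Nat.lt_or_ge i j with hlt | hge
  · exact sub_ne_zero.mpr (ne_of_gt (nd_strictMono hlt))
  · have : j < i := by omega
    exact sub_ne_zero.mpr (ne_of_lt (nd_strictMono this))

lemma claimNum (D j : ℕ) :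
    |β D j| * (∏ i ∈ (range (D+1)).erase j, |nd j - nd i|)
      = ∏ i ∈ (range (D+1)).erase j, nd i := by
  rw [β_eq, Finset.abs_prod, ← Finset.prod_mul_distrib]
  refine Finset.prod_congr rfl fun i hi => ?_
  have hij : i ≠ j := (Finset.mem_erase.mp hi).1
  have hΔ : nd j - nd i ≠ 0 := nd_ne hij
  rw [abs_mul, abs_inv]
  have : |(0:ℝ) - nd i| = nd i := by
    rw [zero_sub, abs_neg, abs_of_pos (nd_pos i)]
  rw [this]
  field_simp

lemma claimDenNat (D j : ℕ) (hj : 1 ≤ j) (hjD : j ≤ D) :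
    (∏ i ∈ range j, 2*(j+i)*(j-i)) * (∏ i ∈ Ico (j+1) (D+1), 2*(i+j)*(i-j))
      = 2^(D-1) * (D-j).factorial * (D+j).factorial := by
  have e1 : ∏ i ∈ range j, 2*(j+i)*(j-i)
      = 2^j * (∏ i ∈ range j, (j+i)) * j.factorial := by
    rw [← prod_range_sub j]
    have : (2:ℕ)^j = ∏ _i ∈ range j, 2 := by rw [Finset.prod_const, card_range]
    rw [this, ← Finset.prod_mul_distrib, ← Finset.prod_mul_distrib]
  have e2 : ∏ i ∈ Ico (j+1) (D+1), 2*(i+j)*(i-j)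
      = 2^(D-j) * (∏ i ∈ Ico (j+1) (D+1), (i+j)) * (D-j).factorial := by
    rw [← prod_Ico_sub j D]
    have hcard : (Ico (j+1) (D+1)).card = D - j := by rw [Nat.card_Ico]; omega
    have : (2:ℕ)^(D-j) = ∏ _i ∈ Ico (j+1) (D+1), 2 := by rw [Finset.prod_const, hcard]
    rw [this, ← Finset.prod_mul_distrib, ← Finset.prod_mul_distrib]
  rw [e1, e2]
  apply Nat.eq_of_mul_eq_mul_left (show 0 < 2 by norm_num)
  have hX := prod_range_add j hj
  have hY := prod_Ico_add j D hj hjD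
  have hfac : j.factorial = j * (j-1).factorial := by
    obtain ⟨l, rfl⟩ : ∃ l, j = l + 1 := ⟨j - 1, by omega⟩
    simp [Nat.factorial_succ]
  have hpow : (2:ℕ) * (2^(D-1)) = 2^D := by
    have h : (2:ℕ) * (2^(D-1)) = 2^((D-1)+1) := by rw [pow_succ]; ring
    rw [h]; congr 1; omega
  have hpow2 : (2:ℕ)^j * 2^(D-j) = 2^D := by
    rw [← pow_add]; congr 1; omega
  calc 2 * (2^j * (∏ i ∈ range j, (j+i)) * j.factorial *
        (2^(D-j) * (∏ i ∈ Ico (j+1) (D+1), (i+j)) * (D-j).factorial))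
      = (2^j * 2^(D-j)) * ((j-1).factorial * (2*j) * (∏ i ∈ range j, (j+i))) *
        (∏ i ∈ Ico (j+1) (D+1), (i+j)) * (D-j).factorial := by rw [hfac]; ring
    _ = 2^D * ((2*j).factorial * (∏ i ∈ Ico (j+1) (D+1), (i+j))) * (D-j).factorial := by
        rw [hpow2, hX]; ring
    _ = 2^D * (D+j).factorial * (D-j).factorial := by rw [hY]
    _ = 2 * (2^(D-1) * (D-j).factorial * (D+j).factorial) := by rw [← hpow]; ring

lemma claimDen (D j : ℕ) (hj : 1 ≤ j) (hjD : j ≤ D) :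
    ∏ i ∈ (range (D+1)).erase j, |nd j - nd i|
      = ((2^(D-1) * (D-j).factorial * (D+j).factorial : ℕ) : ℝ) := by
  rw [erase_split hjD, Finset.prod_union (erase_disj j D)]
  have h1 : ∏ i ∈ range j, |nd j - nd i| = ((∏ i ∈ range j, 2*(j+i)*(j-i) : ℕ) : ℝ) := by
    push_cast
    refine Finset.prod_congr rfl fun i hi => ?_
    simp only [mem_range] at hi
    have hconv : ((j - i : ℕ) : ℝ) = (j:ℝ) - i := by
      have : i ≤ j := le_of_lt hi
      push_cast [Nat.cast_sub this]; ring
    rw [hconv]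
    have hlt : nd i < nd j := nd_strictMono hi
    rw [abs_of_pos (by linarith)]
    unfold nd; ring
  have h2 : ∏ i ∈ Ico (j+1) (D+1), |nd j - nd i|
      = ((∏ i ∈ Ico (j+1) (D+1), 2*(i+j)*(i-j) : ℕ) : ℝ) := by
    push_cast
    refine Finset.prod_congr rfl fun i hi => ?_
    simp only [mem_Ico] at hi
    have hconv : ((i - j : ℕ) : ℝ) = (i:ℝ) - j := by
      have : j ≤ i := by omega
      push_cast [Nat.cast_sub this]; ring
    rw [hconv]
    have hlt : nd j < nd i := nd_strictMono (by omega)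
    rw [abs_of_neg (by linarith), neg_sub]
    unfold nd; ring
  rw [h1, h2, ← Nat.cast_mul, claimDenNat D j hj hjD]

lemma den0Nat (D : ℕ) : ∏ i ∈ Ico 1 (D+1), (2*i*i) = 2^D * D.factorial * D.factorial := by
  have hcard : (Ico 1 (D+1)).card = D := by rw [Nat.card_Ico]; omega
  have e : ∏ i ∈ Ico 1 (D+1), (2*i*i)
      = 2^D * (∏ i ∈ Ico 1 (D+1), i) * (∏ i ∈ Ico 1 (D+1), i) := by
    have h2 : (2:ℕ)^D = ∏ _i ∈ Ico 1 (D+1), 2 := by rw [Finset.prod_const, hcard]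
    rw [h2, ← Finset.prod_mul_distrib, ← Finset.prod_mul_distrib]
  rw [e, Finset.prod_Ico_id_eq_factorial]

lemma claimβ0 (D : ℕ) :
    β D 0 * ((2^D * D.factorial * D.factorial : ℕ) : ℝ) = ∏ i ∈ range (D+1), nd i := by
  have h0mem : (0:ℕ) ∈ range (D+1) := by simp
  have hnd0 : nd 0 = 1 := by unfold nd; norm_num
  have hfull : ∏ i ∈ range (D+1), nd i = ∏ i ∈ Ico 1 (D+1), nd i := by
    rw [← Finset.mul_prod_erase (range (D+1)) nd h0mem, hnd0, one_mul]
    congr 1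
    ext i; simp only [mem_erase, mem_range, mem_Ico]; omega
  rw [hfull, β_zero_eq, ← den0Nat D]
  push_cast
  rw [← Finset.prod_mul_distrib]
  refine Finset.prod_congr rfl fun i hi => ?_
  simp only [mem_Ico] at hi
  have h1 : (1:ℝ) ≤ i := by exact_mod_cast hi.1
  have hne : (2:ℝ)*(i:ℝ)^2 ≠ 0 := by positivity
  have e : (1 + 1/(2*(i:ℝ)^2)) * (2*(i:ℝ)*(i:ℝ)) = 2*(i:ℝ)^2+1 := by
    have h2 : (2:ℝ)*(i:ℝ)*(i:ℝ) = 2*(i:ℝ)^2 := by ring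
    rw [h2, add_mul, one_mul, one_div, inv_mul_cancel₀ hne]
  rw [e]
  unfold nd
  ring

lemma abs_β_le (D j : ℕ) (hj : 1 ≤ j) (hjD : j ≤ D) :
    |β D j| * nd j ≤ 2 * β D 0 := by
  have hjmem : j ∈ range (D+1) := by simp; omega
  have hFull : (0:ℝ) < ∏ i ∈ range (D+1), nd i := Finset.prod_pos fun i _ => nd_pos i
  have hDenJ : (0:ℝ) < ((2^(D-1) * (D-j).factorial * (D+j).factorial : ℕ) : ℝ) := by
    have : 0 < 2^(D-1) * (D-j).factorial * (D+j).factorial :=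
      Nat.mul_pos (Nat.mul_pos (Nat.pow_pos (by norm_num)) (D-j).factorial_pos)
        (D+j).factorial_pos
    exact_mod_cast this
  have hDen0 : (0:ℝ) < ((2^D * D.factorial * D.factorial : ℕ) : ℝ) := by
    have : 0 < 2^D * D.factorial * D.factorial :=
      Nat.mul_pos (Nat.mul_pos (Nat.pow_pos (by norm_num)) D.factorial_pos)
        D.factorial_pos
    exact_mod_cast this
  have eq1 : |β D j| * nd j * ((2^(D-1) * (D-j).factorial * (D+j).factorial : ℕ) : ℝ)
      = ∏ i ∈ range (D+1), nd i := by
    rw [← claimDen D j hj hjD]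
    calc |β D j| * nd j * ∏ i ∈ (range (D+1)).erase j, |nd j - nd i|
        = (|β D j| * ∏ i ∈ (range (D+1)).erase j, |nd j - nd i|) * nd j := by ring
      _ = (∏ i ∈ (range (D+1)).erase j, nd i) * nd j := by rw [claimNum]
      _ = ∏ i ∈ range (D+1), nd i := by
          rw [mul_comm]; exact Finset.mul_prod_erase (range (D+1)) nd hjmem
  have eq2 := claimβ0 D
  have key : ((2^D * D.factorial * D.factorial : ℕ) : ℝ)
      ≤ 2 * ((2^(D-1) * (D-j).factorial * (D+j).factorial : ℕ) : ℝ) := by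
    have hnat : 2^D * D.factorial * D.factorial
        ≤ 2 * (2^(D-1) * (D-j).factorial * (D+j).factorial) := by
      have hpow : (2:ℕ)^D = 2 * 2^(D-1) := by
        have h : (2:ℕ) * (2^(D-1)) = 2^((D-1)+1) := by rw [pow_succ]; ring
        rw [h]; congr 1; omega
      rw [hpow]
      have := factorial_sq_le j D hjD
      calc 2 * 2^(D-1) * D.factorial * D.factorial
          = 2 * (2^(D-1) * (D.factorial * D.factorial)) := by ring
        _ ≤ 2 * (2^(D-1) * ((D-j).factorial * (D+j).factorial)) := by
            exact Nat.mul_le_mul_left _ (Nat.mul_le_mul_left _ this)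
        _ = 2 * (2^(D-1) * (D-j).factorial * (D+j).factorial) := by ring
    exact_mod_cast hnat
  -- conclude
  have h3 : (2 * β D 0 - |β D j| * nd j) * ((2^(D-1) * (D-j).factorial * (D+j).factorial : ℕ) : ℝ)
      = β D 0 * (2 * ((2^(D-1) * (D-j).factorial * (D+j).factorial : ℕ) : ℝ)
          - ((2^D * D.factorial * D.factorial : ℕ) : ℝ)) := by
    linear_combination eq2 - eq1
  have h4 : 0 ≤ (2 * β D 0 - |β D j| * nd j)
      * ((2^(D-1) * (D-j).factorial * (D+j).factorial : ℕ) : ℝ) := by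
    rw [h3]
    apply mul_nonneg (β_zero_pos D).le
    linarith [key]
  nlinarith [h4, hDenJ]

theorem crux (D N : ℕ) (hD : 1 ≤ D) (q : Polynomial ℝ) (hdeg : q.natDegree ≤ D)
    (h0 : q.eval 0 = 1) (h1 : q.eval 1 = -1)
    (hb : ∀ k : ℕ, k ≤ N → |q.eval (k:ℝ)| ≤ 1) : N ≤ 2*D^2 := by
  by_contra hcon
  push_neg at hcon
  have hvs : Set.InjOn nd ((range (D+1) : Finset ℕ) : Set ℕ) := nd_injOn D
  have hdlt : q.degree < (range (D+1)).card := by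
    rw [card_range]
    exact lt_of_le_of_lt Polynomial.degree_le_natDegree
      (by exact_mod_cast Nat.lt_succ_of_le hdeg)
  have hinterp := Lagrange.eq_interpolate hvs hdlt
  have heval : q.eval 0 = ∑ j ∈ range (D+1), q.eval (nd j) * β D j := by
    conv_lhs => rw [hinterp]
    rw [Lagrange.interpolate_apply, Polynomial.eval_finset_sum]
    exact Finset.sum_congr rfl fun j _ => by
      rw [Polynomial.eval_mul, Polynomial.eval_C]; rfl
  have hnode : ∀ j, j ≤ D → |q.eval (nd j)| ≤ 1 := by
    intro j hj
    rw [nd_cast]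
    apply hb
    have hsq : j^2 ≤ D^2 := Nat.pow_le_pow_left hj 2
    omega
  have hnd0 : nd 0 = 1 := by unfold nd; norm_num
  have hsplit : ∑ j ∈ range (D+1), q.eval (nd j) * β D j
      = q.eval (nd 0) * β D 0 + ∑ j ∈ Ico 1 (D+1), q.eval (nd j) * β D j := by
    rw [range_eq_Ico]
    exact Finset.sum_eq_sum_Ico_succ_bot (by omega) _
  have hterm : ∀ j ∈ Ico 1 (D+1),
      q.eval (nd j) * β D j ≤ 2 * β D 0 * (1 / (2*(j:ℝ)^2+1)) := by
    intro j hj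
    simp only [mem_Ico] at hj
    have hj1 : 1 ≤ j := hj.1
    have hjD : j ≤ D := by omega
    have habs := abs_β_le D j hj1 hjD
    have hq := hnode j hjD
    have hndpos := nd_pos j
    have h1' : q.eval (nd j) * β D j ≤ |β D j| := by
      calc q.eval (nd j) * β D j ≤ |q.eval (nd j) * β D j| := le_abs_self _
        _ = |q.eval (nd j)| * |β D j| := abs_mul _ _
        _ ≤ 1 * |β D j| := by
            apply mul_le_mul_of_nonneg_right hq (abs_nonneg _)
        _ = |β D j| := one_mul _
    have h2' : |β D j| ≤ 2 * β D 0 * (1 / nd j) := by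
      rw [mul_one_div, le_div_iff₀ hndpos]
      linarith [habs]
    have : (1:ℝ) / nd j = 1 / (2*(j:ℝ)^2+1) := by unfold nd; ring_nf
    rw [this] at h2'
    linarith
  have hsum : ∑ j ∈ Ico 1 (D+1), q.eval (nd j) * β D j ≤ (4/3) * β D 0 := by
    calc ∑ j ∈ Ico 1 (D+1), q.eval (nd j) * β D j
        ≤ ∑ j ∈ Ico 1 (D+1), 2 * β D 0 * (1 / (2*(j:ℝ)^2+1)) := Finset.sum_le_sum hterm
      _ = 2 * β D 0 * ∑ j ∈ Ico 1 (D+1), (1 / (2*(j:ℝ)^2+1)) := by rw [Finset.mul_sum]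
      _ ≤ 2 * β D 0 * (2/3) := by
          apply mul_le_mul_of_nonneg_left _ (by linarith [β_zero_pos D])
          have := sum_inv_le D hD
          have hpos : (0:ℝ) < (2/3)/((D:ℝ)+1) := by positivity
          linarith
      _ = (4/3) * β D 0 := by ring
  have hfinal : 3 ≤ β D 0 := by
    rw [heval, hsplit, hnd0, h1] at h0
    linarith [h0, hsum]
  linarith [β_zero_lt_three D hD]



variable {ι : Type*} [DecidableEq ι]

/-- Alternating sum over an interval of the powerset lattice. -/
lemma alt_sum_interval (A' A : Finset ι) (hA' : A' ⊆ A) :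
    ∑ B ∈ A.powerset.filter (fun B => A' ⊆ B), (-1:ℝ)^(B.card - A'.card)
      = if A' = A then 1 else 0 := by
  have hbij : ∑ B ∈ A.powerset.filter (fun B => A' ⊆ B), (-1:ℝ)^(B.card - A'.card)
      = ∑ E ∈ (A \ A').powerset, (-1:ℝ)^E.card := by
    refine Finset.sum_nbij' (fun B => B \ A') (fun E => A' ∪ E) ?_ ?_ ?_ ?_ ?_
    · intro B hB
      simp only [mem_filter, mem_powerset] at hB
      simp only [mem_powerset]
      exact sdiff_subset_sdiff hB.1 Subset.rfl
    · intro E hE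
      simp only [mem_powerset] at hE
      simp only [mem_filter, mem_powerset]
      constructor
      · exact union_subset hA' (hE.trans sdiff_subset)
      · exact subset_union_left
    · intro B hB
      simp only [mem_filter, mem_powerset] at hB
      exact (union_sdiff_of_subset hB.2)
    · intro E hE
      simp only [mem_powerset] at hE
      refine union_sdiff_cancel_left ?_
      have : Disjoint A' (A \ A') := disjoint_sdiff
      exact this.mono_right hE
    · intro B hB
      simp only [mem_filter, mem_powerset] at hB
      have hc : (B \ A').card = B.card - A'.card := card_sdiff_of_subset hB.2
      simp [hc]
  rw [hbij]
  have := @Finset.sum_powerset_neg_one_pow_card ι _ (A \ A')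
  have hcast : ∑ E ∈ (A \ A').powerset, (-1:ℝ)^E.card
      = (((∑ E ∈ (A \ A').powerset, (-1:ℤ)^E.card : ℤ)) : ℝ) := by push_cast; rfl
  rw [hcast, this]
  by_cases h : A \ A' = ∅
  · have : A' = A := Subset.antisymm hA' (by
      intro x hx
      by_contra hx'
      exact (Finset.eq_empty_iff_forall_notMem.mp h x) (mem_sdiff.mpr ⟨hx, hx'⟩))
    simp [h, this]
  · have : ¬ (A' = A) := fun he => h (by simp [he])
    simp [h, this]

/-- Binomial/Möbius inversion over the subset lattice. -/
lemma inversion (h : Finset ι → ℝ) (A : Finset ι) :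
    ∑ B ∈ A.powerset, (∑ A' ∈ B.powerset, (-1:ℝ)^(B.card - A'.card) * h A') = h A := by
  rw [Finset.sum_comm' (s := A.powerset) (t := fun B => B.powerset)
    (t' := A.powerset) (s' := fun A' => A.powerset.filter (fun B => A' ⊆ B))
    (f := fun B A' => (-1:ℝ)^(B.card - A'.card) * h A')
    (by
      intro B A'
      simp only [mem_powerset, mem_filter]
      constructor
      · rintro ⟨h1, h2⟩; exact ⟨⟨h1, h2⟩, h2.trans h1⟩
      · rintro ⟨⟨h1, h2⟩, _⟩; exact ⟨h1, h2⟩)]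
  have : ∀ A' ∈ A.powerset,
      ∑ B ∈ A.powerset.filter (fun B => A' ⊆ B), (-1:ℝ)^(B.card - A'.card) * h A'
        = (if A' = A then 1 else 0) * h A' := by
    intro A' hA'
    rw [← Finset.sum_mul, alt_sum_interval A' A (mem_powerset.mp hA')]
  rw [Finset.sum_congr rfl this]
  simp only [ite_mul, one_mul, zero_mul]
  rw [Finset.sum_ite_eq' A.powerset A (fun A' => h A')]
  simp

/-- Counting supersets of a fixed `B` inside `powersetCard`. -/
lemma count_supersets (S B : Finset ι) (hB : B ⊆ S) (k : ℕ) (hk : B.card ≤ k) :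
    ((S.powersetCard k).filter (fun A => B ⊆ A)).card
      = (S.card - B.card).choose (k - B.card) := by
  have : ((S.powersetCard k).filter (fun A => B ⊆ A)).card
      = ((S \ B).powersetCard (k - B.card)).card := by
    refine Finset.card_bij' (fun A _ => A \ B) (fun E _ => B ∪ E) ?_ ?_ ?_ ?_
    · intro A hA
      simp only [mem_filter, mem_powersetCard] at hA
      obtain ⟨⟨hAS, hAk⟩, hBA⟩ := hA
      rw [mem_powersetCard]
      refine ⟨sdiff_subset_sdiff hAS Subset.rfl, ?_⟩
      rw [card_sdiff_of_subset hBA, hAk]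
    · intro E hE
      rw [mem_powersetCard] at hE
      obtain ⟨hES, hEc⟩ := hE
      simp only [mem_filter, mem_powersetCard]
      have hdisj : Disjoint B E := disjoint_sdiff.mono_right hES
      refine ⟨⟨union_subset hB (hES.trans sdiff_subset), ?_⟩, subset_union_left⟩
      rw [card_union_of_disjoint hdisj, hEc]
      omega
    · intro A hA
      simp only [mem_filter, mem_powersetCard] at hA
      exact union_sdiff_of_subset hA.2
    · intro E hE
      rw [mem_powersetCard] at hE
      exact union_sdiff_cancel_left (disjoint_sdiff.mono_right hE.1)
  rw [this, card_powersetCard, card_sdiff_of_subset hB]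

lemma count_supersets_empty (S B : Finset ι) (k : ℕ) (hk : k < B.card) :
    ((S.powersetCard k).filter (fun A => B ⊆ A)) = ∅ := by
  rw [Finset.eq_empty_iff_forall_notMem]
  intro A hA
  simp only [mem_filter, mem_powersetCard] at hA
  obtain ⟨⟨_, hAk⟩, hBA⟩ := hA
  have := Finset.card_le_card hBA
  omega



lemma card_support_le_totalDegree {σ : Type*} (P : MvPolynomial σ ℂ)
    (d : σ →₀ ℕ) (hd : d ∈ P.support) : d.support.card ≤ P.totalDegree := by
  have h1 : d.support.card ≤ d.sum fun _ e => e := by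
    rw [Finsupp.sum]
    calc d.support.card = ∑ _i ∈ d.support, 1 := by rw [Finset.sum_const]; simp
      _ ≤ ∑ i ∈ d.support, d i := by
          apply Finset.sum_le_sum
          intro i hi
          exact Nat.one_le_iff_ne_zero.mpr (Finsupp.mem_support_iff.mp hi)
  exact h1.trans (MvPolynomial.le_totalDegree hd)

lemma vanish {σ : Type*} [DecidableEq σ] (P : MvPolynomial σ ℂ) (D : ℕ)
    (hP : P.totalDegree ≤ D) (u v : σ → ℂ) (B : Finset σ) (hB : D < B.card) :
    ∑ A ∈ B.powerset, (-1:ℂ)^(B.card - A.card)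
      * MvPolynomial.eval (fun i => if i ∈ A then u i else v i) P = 0 := by
  have heval : ∀ A : Finset σ,
      MvPolynomial.eval (fun i => if i ∈ A then u i else v i) P
      = ∑ d ∈ P.support, P.coeff d *
          ∏ i ∈ d.support, (if i ∈ A then u i else v i) ^ d i :=
    fun A => MvPolynomial.eval_eq _ P
  calc ∑ A ∈ B.powerset, (-1:ℂ)^(B.card - A.card)
        * MvPolynomial.eval (fun i => if i ∈ A then u i else v i) P
      = ∑ A ∈ B.powerset, ∑ d ∈ P.support, (-1:ℂ)^(B.card - A.card) * (P.coeff d *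
          ∏ i ∈ d.support, (if i ∈ A then u i else v i) ^ d i) := by
        refine Finset.sum_congr rfl fun A _ => ?_
        rw [heval A, Finset.mul_sum]
    _ = ∑ d ∈ P.support, ∑ A ∈ B.powerset, (-1:ℂ)^(B.card - A.card) * (P.coeff d *
          ∏ i ∈ d.support, (if i ∈ A then u i else v i) ^ d i) := Finset.sum_comm
    _ = ∑ d ∈ P.support, P.coeff d * ∑ A ∈ B.powerset, (-1:ℂ)^(B.card - A.card) *
          ∏ i ∈ d.support, (if i ∈ A then u i else v i) ^ d i := by
        refine Finset.sum_congr rfl fun d _ => ?_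
        rw [Finset.mul_sum]
        exact Finset.sum_congr rfl fun A _ => by ring
    _ = 0 := by
        apply Finset.sum_eq_zero
        intro d hd
        have hcard : d.support.card ≤ D := (card_support_le_totalDegree P d hd).trans hP
        have hnsub : ¬ B ⊆ d.support := fun hsub => by
          have := Finset.card_le_card hsub
          omega
        obtain ⟨i₀, hi₀B, hi₀d⟩ := Finset.not_subset.mp hnsub
        rw [mul_eq_zero]; right
        -- involution pairing
        set f : Finset σ → ℂ := fun A => (-1:ℂ)^(B.card - A.card) *
          ∏ i ∈ d.support, (if i ∈ A then u i else v i) ^ d i with hf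
        have key : ∀ (A : Finset σ), A ∈ B.powerset →
            ∏ i ∈ d.support, (if i ∈ (if i₀ ∈ A then A.erase i₀ else insert i₀ A)
              then u i else v i) ^ d i
            = ∏ i ∈ d.support, (if i ∈ A then u i else v i) ^ d i := by
          intro A _
          refine Finset.prod_congr rfl fun i hi => ?_
          have hne : i ≠ i₀ := fun he => hi₀d (he ▸ hi)
          by_cases hiA : i₀ ∈ A
          · simp [hiA, hne]
          · simp [hiA, hne]
        refine Finset.sum_involution
          (fun A _ => if i₀ ∈ A then A.erase i₀ else insert i₀ A) ?_ ?_ ?_ ?_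
        · -- f A + f (g A) = 0
          intro A hA
          rw [mem_powerset] at hA
          have hcardle := Finset.card_le_card hA
          rw [key A (mem_powerset.mpr hA)]
          by_cases hiA : i₀ ∈ A
          · simp only [hiA, if_true]
            have h1 : 1 ≤ A.card := Finset.card_pos.mpr ⟨i₀, hiA⟩
            have hc : (A.erase i₀).card = A.card - 1 := Finset.card_erase_of_mem hiA
            have hexp : B.card - (A.erase i₀).card = (B.card - A.card) + 1 := by
              rw [hc]; omega
            rw [hexp, pow_succ]
            ring
          · simp only [hiA, if_false]
            have hss : A ⊂ B := Finset.ssubset_iff_of_subset hA |>.mpr ⟨i₀, hi₀B, hiA⟩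
            have hlt := Finset.card_lt_card hss
            have hc : (insert i₀ A).card = A.card + 1 := Finset.card_insert_of_notMem hiA
            have hexp : B.card - A.card = (B.card - (insert i₀ A).card) + 1 := by
              rw [hc]; omega
            rw [hexp, pow_succ]
            ring
        · -- nonzero → g A ≠ A
          intro A hA _
          by_cases hiA : i₀ ∈ A
          · simp only [hiA, if_true]
            intro he
            rw [← he] at hiA
            exact Finset.notMem_erase i₀ A hiA
          · simp only [hiA, if_false]
            intro he
            exact hiA (he ▸ Finset.mem_insert_self i₀ A)
        · -- g A ∈ B.powerset
          intro A hA
          rw [mem_powerset] at hA ⊢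
          by_cases hiA : i₀ ∈ A
          · simp only [hiA, if_true]
            exact (Finset.erase_subset i₀ A).trans hA
          · simp only [hiA, if_false]
            exact Finset.insert_subset hi₀B hA
        · -- involution
          intro A hA
          by_cases hiA : i₀ ∈ A
          · simp [hiA, Finset.insert_erase hiA]
          · simp [hiA, Finset.erase_insert hiA]

/-- The symmetrization of a low-degree cube function is (a multiple of) a low-degree
univariate polynomial. -/
theorem symm_poly (S : Finset ι) (D : ℕ) (hD : D ≤ S.card) (h : Finset ι → ℝ)
    (hvan : ∀ B, B ⊆ S → D < B.card →
      ∑ A ∈ B.powerset, (-1:ℝ)^(B.card - A.card) * h A = 0) :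
    ∃ p : Polynomial ℝ, p.natDegree ≤ D ∧
      ∀ k : ℕ, k ≤ S.card →
        (S.card.choose k : ℝ) * p.eval (k:ℝ) = ∑ A ∈ S.powersetCard k, h A := by
  classical
  set C := S.card with hC
  set a : Finset ι → ℝ := fun B => ∑ A ∈ B.powerset, (-1:ℝ)^(B.card - A.card) * h A with ha
  set cc : ℕ → ℝ := fun b => ∑ B ∈ S.powersetCard b, a B with hcc
  refine ⟨∑ b ∈ range (D+1),
    Polynomial.C (cc b / ((C.choose b : ℝ) * (b.factorial : ℝ))) * descPochhammer ℝ b, ?_, ?_⟩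
  · apply Polynomial.natDegree_sum_le_of_forall_le
    intro b hb
    simp only [mem_range] at hb
    calc (Polynomial.C _ * descPochhammer ℝ b).natDegree
        ≤ (Polynomial.C (cc b / ((C.choose b : ℝ) * (b.factorial : ℝ)))).natDegree
          + (descPochhammer ℝ b).natDegree := Polynomial.natDegree_mul_le
      _ ≤ D := by
          rw [Polynomial.natDegree_C, descPochhammer_natDegree]
          omega
  · intro k hk
    -- evaluate
    have heval : (∑ b ∈ range (D+1),
        Polynomial.C (cc b / ((C.choose b : ℝ) * (b.factorial : ℝ)))
          * descPochhammer ℝ b).eval (k:ℝ)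
        = ∑ b ∈ range (D+1), cc b / ((C.choose b : ℝ) * (b.factorial : ℝ))
            * (k.descFactorial b : ℝ) := by
      rw [Polynomial.eval_finset_sum]
      refine Finset.sum_congr rfl fun b _ => ?_
      rw [Polynomial.eval_mul, Polynomial.eval_C, descPochhammer_eval_eq_descFactorial]
    rw [heval, Finset.mul_sum]
    -- step 1: per-b coefficient simplification
    have step1 : ∀ b ∈ range (D+1),
        (C.choose k : ℝ) * (cc b / ((C.choose b : ℝ) * (b.factorial : ℝ))
            * (k.descFactorial b : ℝ))
        = cc b * (if b ≤ k then ((C - b).choose (k - b) : ℝ) else 0) := by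
      intro b hb
      simp only [mem_range] at hb
      have hbC : b ≤ C := by omega
      have hch : (C.choose b : ℝ) ≠ 0 := by
        have := Nat.choose_pos hbC
        positivity
      have hfac : (b.factorial : ℝ) ≠ 0 := by
        have := b.factorial_pos
        positivity
      by_cases hbk : b ≤ k
      · rw [if_pos hbk]
        have hid : C.choose k * k.choose b = C.choose b * (C - b).choose (k - b) :=
          Nat.choose_mul hbk
        have hdesc : (k.descFactorial b : ℝ) = (b.factorial : ℝ) * (k.choose b : ℝ) := by
          rw [← Nat.cast_mul, ← Nat.descFactorial_eq_factorial_mul_choose]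
        rw [hdesc]
        field_simp
        have : (C.choose k : ℝ) * (k.choose b : ℝ) = (C.choose b : ℝ) * ((C-b).choose (k-b) : ℝ) := by
          rw [← Nat.cast_mul, ← Nat.cast_mul, hid]
        calc (C.choose k : ℝ) * cc b * (k.choose b : ℝ)
            = ((C.choose k : ℝ) * (k.choose b : ℝ)) * cc b := by ring
          _ = ((C.choose b : ℝ) * ((C-b).choose (k-b) : ℝ)) * cc b := by
              rw [this]
          _ = cc b * (C.choose b : ℝ) * ((C-b).choose (k-b) : ℝ) := by ring
      · rw [if_neg hbk]
        have : k.descFactorial b = 0 := Nat.descFactorial_eq_zero_iff_lt.mpr (by omega)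
        rw [this]
        simp
    rw [Finset.sum_congr rfl step1]
    -- step 2: extend the sum from range (D+1) to range (C+1) using vanishing
    have step2 : ∑ b ∈ range (D+1), cc b * (if b ≤ k then ((C - b).choose (k - b) : ℝ) else 0)
        = ∑ b ∈ range (C+1), cc b * (if b ≤ k then ((C - b).choose (k - b) : ℝ) else 0) := by
      apply Finset.sum_subset
      · intro b hb
        simp only [mem_range] at *
        omega
      · intro b hb hb'
        simp only [mem_range] at hb hb'
        have hvb : cc b = 0 := by
          rw [hcc]
          apply Finset.sum_eq_zero
          intro B hB
          rw [mem_powersetCard] at hB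
          exact hvan B hB.1 (by omega)
        rw [hvb, zero_mul]
    rw [step2]
    -- step 3: convert to a sum over the powerset
    have step3 : ∑ b ∈ range (C+1), cc b * (if b ≤ k then ((C - b).choose (k - b) : ℝ) else 0)
        = ∑ B ∈ S.powerset, a B * (if B.card ≤ k then ((C - B.card).choose (k - B.card) : ℝ) else 0) := by
      rw [Finset.powerset_card_disjiUnion]
      erw [Finset.sum_disjiUnion]
      refine Finset.sum_congr rfl fun b _ => ?_
      rw [hcc, Finset.sum_mul]
      refine Finset.sum_congr rfl fun B hB => ?_
      rw [mem_powersetCard] at hB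
      rw [hB.2]
    rw [step3]
    -- step 4: replace the choose by a card of a filter, then swap
    have step4 : ∀ B ∈ S.powerset,
        a B * (if B.card ≤ k then ((C - B.card).choose (k - B.card) : ℝ) else 0)
        = ∑ A ∈ (S.powersetCard k).filter (fun A => B ⊆ A), a B := by
      intro B hB
      rw [mem_powerset] at hB
      rw [Finset.sum_const, nsmul_eq_mul]
      by_cases hbk : B.card ≤ k
      · rw [if_pos hbk, count_supersets S B hB k hbk, mul_comm]
      · rw [if_neg hbk, count_supersets_empty S B k (by omega)]
        simp
    rw [Finset.sum_congr rfl step4]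
    -- step 5: swap sums
    have step5 : ∑ B ∈ S.powerset, ∑ A ∈ (S.powersetCard k).filter (fun A => B ⊆ A), a B
        = ∑ A ∈ S.powersetCard k, ∑ B ∈ A.powerset, a B := by
      refine Finset.sum_comm' ?_
      intro B A
      simp only [mem_powerset, mem_filter, mem_powersetCard]
      constructor
      · rintro ⟨h1, h2, h3⟩; exact ⟨h3, h2⟩
      · rintro ⟨h1, h2⟩; exact ⟨h1.trans h2.1, h2, h1⟩
    rw [step5]
    refine Finset.sum_congr rfl fun A hA => ?_
    simp only [ha]
    exact inversion h A


/-- Every function on `T^n` is represented by some polynomial (Lagrange interpolation). -/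
lemma exists_represents (T : Finset ℂ) (n : ℕ) (f : (Fin n → ↥T) → ↥T) :
    ∃ F : MvPolynomial (Fin n) ℂ, Represents T n F f := by
  classical
  refine ⟨∑ x : (Fin n → ↥T), MvPolynomial.C (f x : ℂ) *
    ∏ i : Fin n, ∏ s ∈ T.erase (x i : ℂ),
      (MvPolynomial.C (((x i : ℂ) - s)⁻¹) * (MvPolynomial.X i - MvPolynomial.C s)), ?_⟩
  intro y
  rw [map_sum]
  have key : ∀ x : (Fin n → ↥T),
      MvPolynomial.eval (fun i => (y i : ℂ)) (MvPolynomial.C (f x : ℂ) *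
        ∏ i : Fin n, ∏ s ∈ T.erase (x i : ℂ),
          (MvPolynomial.C (((x i : ℂ) - s)⁻¹) * (MvPolynomial.X i - MvPolynomial.C s)))
      = if x = y then (f x : ℂ) else 0 := by
    intro x
    rw [map_mul, MvPolynomial.eval_C, MvPolynomial.eval_prod]
    by_cases hxy : x = y
    · subst hxy
      rw [if_pos rfl]
      have : ∀ i : Fin n, i ∈ Finset.univ →
          MvPolynomial.eval (fun i => (x i : ℂ)) (∏ s ∈ T.erase (x i : ℂ),
            (MvPolynomial.C (((x i : ℂ) - s)⁻¹) * (MvPolynomial.X i - MvPolynomial.C s))) = 1 := by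
        intro i _
        rw [MvPolynomial.eval_prod]
        apply Finset.prod_eq_one
        intro s hs
        rw [Finset.mem_erase] at hs
        have hne : (x i : ℂ) - s ≠ 0 := sub_ne_zero.mpr (Ne.symm hs.1)
        simp only [map_mul, MvPolynomial.eval_C, map_sub, MvPolynomial.eval_X,
          MvPolynomial.eval_C]
        field_simp
      rw [Finset.prod_congr rfl this, Finset.prod_const_one, mul_one]
    · rw [if_neg hxy]
      have : ∃ i, x i ≠ y i := by
        by_contra hall
        push_neg at hall
        exact hxy (funext hall)
      obtain ⟨i, hi⟩ := this
      have hzero : MvPolynomial.eval (fun i => (y i : ℂ)) (∏ s ∈ T.erase (x i : ℂ),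
          (MvPolynomial.C (((x i : ℂ) - s)⁻¹) * (MvPolynomial.X i - MvPolynomial.C s))) = 0 := by
        rw [MvPolynomial.eval_prod]
        apply Finset.prod_eq_zero (i := (y i : ℂ))
        · rw [Finset.mem_erase]
          exact ⟨fun he => hi (Subtype.coe_injective he).symm, (y i).2⟩
        · simp
      rw [show (0:ℂ) = (f x : ℂ) * 0 by ring]
      congr 1
      apply Finset.prod_eq_zero (Finset.mem_univ i) hzero
  rw [Finset.sum_congr rfl (fun x _ => key x), Finset.sum_ite_eq' Finset.univ y
    (fun x => ((f x : ℂ)))]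
  simp

lemma degreeF_spec (T : Finset ℂ) (n : ℕ) (f : (Fin n → ↥T) → ↥T) :
    ∃ F : MvPolynomial (Fin n) ℂ, Represents T n F f ∧ F.totalDegree = degreeF T n f := by
  obtain ⟨F₀, hF₀⟩ := exists_represents T n f
  have hne : {d | ∃ F : MvPolynomial (Fin n) ℂ, Represents T n F f ∧ F.totalDegree = d}.Nonempty :=
    ⟨F₀.totalDegree, F₀, hF₀, rfl⟩
  exact Nat.sInf_mem hne

/-- local sensitivity is at most `(|T|-1)` times the number of sensitive coordinates. -/
lemma localSens_le (T : Finset ℂ) (n : ℕ) (f : (Fin n → ↥T) → ↥T) (x : Fin n → ↥T) :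
    localSens T n f x ≤ (T.card - 1) *
      (Finset.univ.filter fun i : Fin n =>
        ∃ t : ↥T, f (Function.update x i t) ≠ f x).card := by
  classical
  rcases Nat.eq_zero_or_pos n with hn0 | hnpos
  · subst hn0
    rw [localSens]
    have he : (Finset.univ.filter fun y : Fin 0 → ↥T => hammingDist x y = 1 ∧ f y ≠ f x) = ∅ := by
      rw [Finset.eq_empty_iff_forall_notMem]
      intro y hy
      rw [Finset.mem_filter] at hy
      have hxy : x = y := funext fun i => i.elim0
      rw [← hxy, hammingDist_self] at hy
      exact absurd hy.2.1 (by norm_num)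
    rw [he]
    simp
  haveI : Inhabited (Fin n) := ⟨⟨0, hnpos⟩⟩
  set S := Finset.univ.filter fun i : Fin n => ∃ t : ↥T, f (Function.update x i t) ≠ f x with hS
  have hcard : (S.sigma fun i => (Finset.univ : Finset ↥T).erase (x i)).card
      = S.card * (T.card - 1) := by
    rw [Finset.card_sigma]
    have : ∀ i ∈ S, ((Finset.univ : Finset ↥T).erase (x i)).card = T.card - 1 := by
      intro i _
      rw [Finset.card_erase_of_mem (Finset.mem_univ _), Finset.card_univ, Fintype.card_coe]
    rw [Finset.sum_congr rfl this, Finset.sum_const, smul_eq_mul]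
  rw [localSens]
  have hle : (Finset.univ.filter fun y : Fin n → ↥T =>
      hammingDist x y = 1 ∧ f y ≠ f x).card
      ≤ (S.sigma fun i => (Finset.univ : Finset ↥T).erase (x i)).card := by
    apply Finset.card_le_card_of_injOn
      (fun y => ⟨if h : ∃ i, x i ≠ y i then h.choose else default, y (if h : ∃ i, x i ≠ y i then h.choose else default)⟩)
    · intro y hy
      rw [Finset.mem_coe, Finset.mem_filter] at hy
      obtain ⟨-, hdist, hfy⟩ := hy
      rw [hammingDist] at hdist
      obtain ⟨i, hi⟩ := Finset.card_eq_one.mp hdist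
      have hex : ∃ j, x j ≠ y j := by
        have : i ∈ Finset.univ.filter fun j => x j ≠ y j := by rw [hi]; exact Finset.mem_singleton_self i
        rw [Finset.mem_filter] at this
        exact ⟨i, this.2⟩
      have hchoose : (if h : ∃ i, x i ≠ y i then h.choose else default) = i := by
        rw [dif_pos hex]
        have : hex.choose ∈ Finset.univ.filter fun j => x j ≠ y j := by
          rw [Finset.mem_filter]
          exact ⟨Finset.mem_univ _, hex.choose_spec⟩
        rw [hi, Finset.mem_singleton] at this
        exact this
      rw [Finset.mem_coe, Finset.mem_sigma]
      dsimp only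
      constructor
      · rw [hchoose, hS, Finset.mem_filter]
        refine ⟨Finset.mem_univ _, ⟨y i, ?_⟩⟩
        have hupd : Function.update x i (y i) = y := by
          funext j
          rw [Function.update_apply]
          by_cases hji : j = i
          · rw [if_pos hji, hji]
          · rw [if_neg hji]
            by_contra hne
            have : j ∈ Finset.univ.filter fun j => x j ≠ y j := by
              rw [Finset.mem_filter]; exact ⟨Finset.mem_univ _, hne⟩
            rw [hi, Finset.mem_singleton] at this
            exact hji this
        rw [hupd]
        exact hfy
      · rw [hchoose, Finset.mem_erase]
        have : i ∈ Finset.univ.filter fun j => x j ≠ y j := by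
          rw [hi]; exact Finset.mem_singleton_self i
        rw [Finset.mem_filter] at this
        exact ⟨this.2.symm, Finset.mem_univ _⟩
    · intro y hy y' hy' heq
      rw [Finset.mem_coe, Finset.mem_filter] at hy hy'
      obtain ⟨-, hdist, -⟩ := hy
      obtain ⟨-, hdist', -⟩ := hy'
      rw [hammingDist] at hdist hdist'
      obtain ⟨i, hi⟩ := Finset.card_eq_one.mp hdist
      obtain ⟨i', hi'⟩ := Finset.card_eq_one.mp hdist'
      have heq1 := congrArg Sigma.fst heq
      simp only at heq1
      have hval : y (if h : ∃ i, x i ≠ y i then h.choose else default)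
          = y' (if h : ∃ i, x i ≠ y' i then h.choose else default) := by
        have := congrArg Sigma.snd heq
        simpa using this
      -- identify the choices with i and i'
      have hex : ∃ j, x j ≠ y j := by
        have : i ∈ Finset.univ.filter fun j => x j ≠ y j := by rw [hi]; exact Finset.mem_singleton_self i
        rw [Finset.mem_filter] at this; exact ⟨i, this.2⟩
      have hex' : ∃ j, x j ≠ y' j := by
        have : i' ∈ Finset.univ.filter fun j => x j ≠ y' j := by rw [hi']; exact Finset.mem_singleton_self i'
        rw [Finset.mem_filter] at this; exact ⟨i', this.2⟩
      have hc : (if h : ∃ j, x j ≠ y j then h.choose else default) = i := by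
        rw [dif_pos hex]
        have : hex.choose ∈ Finset.univ.filter fun j => x j ≠ y j := by
          rw [Finset.mem_filter]; exact ⟨Finset.mem_univ _, hex.choose_spec⟩
        rw [hi, Finset.mem_singleton] at this; exact this
      have hc' : (if h : ∃ j, x j ≠ y' j then h.choose else default) = i' := by
        rw [dif_pos hex']
        have : hex'.choose ∈ Finset.univ.filter fun j => x j ≠ y' j := by
          rw [Finset.mem_filter]; exact ⟨Finset.mem_univ _, hex'.choose_spec⟩
        rw [hi', Finset.mem_singleton] at this; exact this
      rw [hc, hc'] at heq1
      rw [hc, hc'] at hval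
      subst heq1
      funext j
      by_cases hji : j = i
      · rw [hji]; exact hval
      · have h1 : x j = y j := by
          by_contra hne
          have : j ∈ Finset.univ.filter fun j => x j ≠ y j := by
            rw [Finset.mem_filter]; exact ⟨Finset.mem_univ _, hne⟩
          rw [hi, Finset.mem_singleton] at this; exact hji this
        have h2 : x j = y' j := by
          by_contra hne
          have : j ∈ Finset.univ.filter fun j => x j ≠ y' j := by
            rw [Finset.mem_filter]; exact ⟨Finset.mem_univ _, hne⟩
          rw [hi', Finset.mem_singleton] at this; exact hji this
        rw [← h1, ← h2]
  calc (Finset.univ.filter fun y : Fin n → ↥T =>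
        hammingDist x y = 1 ∧ f y ≠ f x).card
      ≤ (S.sigma fun i => (Finset.univ : Finset ↥T).erase (x i)).card := hle
    _ = S.card * (T.card - 1) := hcard
    _ = (T.card - 1) * S.card := mul_comm _ _



/-- Core bound: the number of sensitive coordinates at a point is at most `2 D²`. -/
lemma core (T : Finset ℂ) (m n : ℕ) (hm : 2 ≤ m) (hT : T.card = m)
    (f : (Fin n → ↥T) → ↥T) (F : MvPolynomial (Fin n) ℂ) (hF : Represents T n F f)
    (x : Fin n → ↥T) :
    (Finset.univ.filter fun i : Fin n =>
      ∃ t : ↥T, f (Function.update x i t) ≠ f x).card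
      ≤ 2 * ((m - 1) * F.totalDegree)^2 := by
  classical
  set d := F.totalDegree with hd
  set S := Finset.univ.filter fun i : Fin n =>
      ∃ t : ↥T, f (Function.update x i t) ≠ f x with hS
  by_contra hcon
  push_neg at hcon
  have hSne : S.Nonempty := by
    rw [← Finset.card_pos]
    have : 0 < 2 * ((m - 1) * d)^2 + 1 := by positivity
    omega
  -- the degree is at least 1
  have hd1 : 1 ≤ d := by
    by_contra h0
    push_neg at h0
    have hd0 : F.totalDegree = 0 := by omega
    have hall := (MvPolynomial.totalDegree_eq_zero_iff _ F).mp hd0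
    have hconst : ∀ y z : Fin n → ↥T, f y = f z := by
      intro y z
      have : (f y : ℂ) = (f z : ℂ) := by
        rw [← hF y, ← hF z, MvPolynomial.eval_eq, MvPolynomial.eval_eq]
        refine Finset.sum_congr rfl fun m' hm' => ?_
        have hsup : m'.support = ∅ := by
          rw [Finsupp.support_eq_empty]
          ext j
          exact hall m' hm' j
        rw [hsup]
        simp
      exact Subtype.coe_injective this
    obtain ⟨i, hi⟩ := hSne
    rw [hS, Finset.mem_filter] at hi
    obtain ⟨-, t, ht⟩ := hi
    exact ht (hconst _ _)
  set D := (m - 1) * d with hD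
  have hD1 : 1 ≤ D := by
    have hm1 : 1 ≤ m - 1 := by omega
    calc 1 = 1 * 1 := by ring
      _ ≤ (m-1) * d := Nat.mul_le_mul hm1 hd1
  -- choose sensitive values
  set w : Fin n → ↥T := fun i =>
    if h : ∃ t : ↥T, f (Function.update x i t) ≠ f x then h.choose else x i with hw
  have hwspec : ∀ i ∈ S, f (Function.update x i (w i)) ≠ f x := by
    intro i hi
    rw [hS, Finset.mem_filter] at hi
    obtain ⟨-, hex⟩ := hi
    rw [hw]
    simp only [dif_pos hex]
    exact hex.choose_spec
  -- cube points
  set z : Finset (Fin n) → (Fin n → ↥T) := fun A j => if j ∈ A then w j else x j with hz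
  have hz0 : z ∅ = x := by funext j; rw [hz]; simp
  have hz1 : ∀ i, z {i} = Function.update x i (w i) := by
    intro i
    funext j
    rw [hz]
    simp only [Finset.mem_singleton, Function.update_apply]
    by_cases h : j = i
    · rw [if_pos h, if_pos h, h]
    · rw [if_neg h, if_neg h]
  -- cube values
  set hfun : Finset (Fin n) → ℝ := fun A => if f (z A) = f x then 1 else 0 with hhfun
  -- the indicator polynomial
  set a₀ : ℂ := (f x : ℂ) with ha₀
  set P : MvPolynomial (Fin n) ℂ :=
    ∏ t ∈ T.erase a₀, (MvPolynomial.C ((a₀ - t)⁻¹) * (F - MvPolynomial.C t)) with hP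
  have hPdeg : P.totalDegree ≤ D := by
    rw [hP]
    calc (∏ t ∈ T.erase a₀,
          (MvPolynomial.C ((a₀ - t)⁻¹) * (F - MvPolynomial.C t))).totalDegree
        ≤ ∑ t ∈ T.erase a₀,
            (MvPolynomial.C ((a₀ - t)⁻¹) * (F - MvPolynomial.C t)).totalDegree :=
          MvPolynomial.totalDegree_finset_prod _ _
      _ ≤ ∑ _t ∈ T.erase a₀, d := by
          apply Finset.sum_le_sum
          intro t _
          calc (MvPolynomial.C ((a₀ - t)⁻¹) * (F - MvPolynomial.C t)).totalDegree
              ≤ (MvPolynomial.C ((a₀ - t)⁻¹) : MvPolynomial (Fin n) ℂ).totalDegree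
                + (F - MvPolynomial.C t).totalDegree := MvPolynomial.totalDegree_mul _ _
            _ ≤ 0 + d := by
                apply add_le_add
                · rw [MvPolynomial.totalDegree_C]
                · rw [sub_eq_add_neg]
                  calc (F + -MvPolynomial.C t).totalDegree
                      ≤ max F.totalDegree (-MvPolynomial.C t : MvPolynomial (Fin n) ℂ).totalDegree :=
                        MvPolynomial.totalDegree_add _ _
                    _ ≤ d := by
                        apply max_le le_rfl
                        rw [MvPolynomial.totalDegree_neg, MvPolynomial.totalDegree_C]
                        omega
            _ = d := by omega
      _ = (T.erase a₀).card * d := by rw [Finset.sum_const, smul_eq_mul]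
      _ = D := by
          rw [Finset.card_erase_of_mem (by rw [ha₀]; exact (f x).2), hT]
  have hPval : ∀ y : Fin n → ↥T,
      MvPolynomial.eval (fun i => (y i : ℂ)) P = if f y = f x then 1 else 0 := by
    intro y
    rw [hP, MvPolynomial.eval_prod]
    by_cases hfy : f y = f x
    · rw [if_pos hfy]
      apply Finset.prod_eq_one
      intro t ht
      rw [Finset.mem_erase] at ht
      rw [map_mul, MvPolynomial.eval_C, map_sub, MvPolynomial.eval_C, hF y, hfy]
      have : (a₀ : ℂ) - t ≠ 0 := sub_ne_zero.mpr (Ne.symm ht.1)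
      field_simp
      rfl
    · rw [if_neg hfy]
      apply Finset.prod_eq_zero (i := (f y : ℂ))
      · rw [Finset.mem_erase]
        exact ⟨fun he => hfy (Subtype.coe_injective he), (f y).2⟩
      · rw [map_mul, map_sub, MvPolynomial.eval_C, MvPolynomial.eval_C, hF y]
        simp
  -- vanishing of finite differences
  have hvan : ∀ B, B ⊆ S → D < B.card →
      ∑ A ∈ B.powerset, (-1:ℝ)^(B.card - A.card) * hfun A = 0 := by
    intro B hBS hBcard
    have hC := vanish P D hPdeg (fun i => (w i : ℂ)) (fun i => (x i : ℂ)) B hBcard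
    have hzz : ∀ A : Finset (Fin n),
        (fun i => if i ∈ A then (w i : ℂ) else (x i : ℂ)) = (fun i => ((z A i : ↥T) : ℂ)) := by
      intro A
      funext i
      rw [hz]
      by_cases hiA : i ∈ A
      · simp [hiA]
      · simp [hiA]
    have hsum : ∑ A ∈ B.powerset, (-1:ℂ)^(B.card - A.card)
        * MvPolynomial.eval (fun i => if i ∈ A then (w i : ℂ) else (x i : ℂ)) P
        = ((∑ A ∈ B.powerset, (-1:ℝ)^(B.card - A.card) * hfun A : ℝ) : ℂ) := by
      push_cast
      refine Finset.sum_congr rfl fun A _ => ?_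
      rw [hzz A, hPval (z A)]
      simp only [hhfun]
      by_cases hfz : f (z A) = f x
      · simp [hfz]
      · simp [hfz]
    rw [hsum] at hC
    exact_mod_cast hC
  have hDC : D ≤ S.card := by
    have h1 : D ≤ 2 * D^2 := by
      have : D * 1 ≤ D * D := Nat.mul_le_mul_left D hD1
      have hDD : D ≤ D^2 := by
        calc D = D * 1 := by ring
          _ ≤ D * D := this
          _ = D^2 := by ring
      omega
    omega
  obtain ⟨p, hpdeg, hpev⟩ := symm_poly S D hDC hfun hvan
  -- p(0) = 1
  have hp0 : p.eval ((0:ℕ):ℝ) = 1 := by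
    have h := hpev 0 (Nat.zero_le _)
    rw [Nat.choose_zero_right, Nat.cast_one, one_mul] at h
    rw [h, Finset.powersetCard_zero, Finset.sum_singleton, hhfun]
    simp [hz0]
  -- p(1) = 0
  have hp1 : p.eval ((1:ℕ):ℝ) = 0 := by
    have h := hpev 1 (by omega)
    rw [Nat.choose_one_right] at h
    have hsum0 : ∑ A ∈ S.powersetCard 1, hfun A = 0 := by
      rw [Finset.powersetCard_one, Finset.sum_map]
      apply Finset.sum_eq_zero
      intro i hi
      simp only [Function.Embedding.coeFn_mk, hhfun, hz1 i]
      rw [if_neg (hwspec i hi)]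
    rw [hsum0] at h
    have hCpos : (0:ℝ) < (S.card : ℝ) := by
      have : 0 < S.card := Finset.card_pos.mpr hSne
      exact_mod_cast this
    have := mul_eq_zero.mp h
    rcases this with h' | h'
    · exact absurd h' (ne_of_gt hCpos)
    · exact h'
  -- bounds
  have hbounds : ∀ k : ℕ, k ≤ S.card → 0 ≤ p.eval (k:ℝ) ∧ p.eval (k:ℝ) ≤ 1 := by
    intro k hk
    have h := hpev k hk
    have hcpos : (0:ℝ) < (S.card.choose k : ℝ) := by
      have := Nat.choose_pos hk
      exact_mod_cast this
    have hsnn : 0 ≤ ∑ A ∈ S.powersetCard k, hfun A := by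
      apply Finset.sum_nonneg
      intro A _
      simp only [hhfun]
      by_cases hfz : f (z A) = f x <;> simp [hfz]
    have hsle : ∑ A ∈ S.powersetCard k, hfun A ≤ (S.card.choose k : ℝ) := by
      calc ∑ A ∈ S.powersetCard k, hfun A ≤ ∑ _A ∈ S.powersetCard k, (1:ℝ) := by
            apply Finset.sum_le_sum
            intro A _
            simp only [hhfun]
            by_cases hfz : f (z A) = f x <;> simp [hfz]
        _ = ((S.powersetCard k).card : ℝ) := by rw [Finset.sum_const]; simp
        _ = (S.card.choose k : ℝ) := by rw [Finset.card_powersetCard]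
    constructor
    · nlinarith [h, hsnn, hcpos]
    · nlinarith [h, hsle, hcpos]
  -- build q = 2p - 1
  set q : Polynomial ℝ := Polynomial.C 2 * p - Polynomial.C 1 with hq
  have hqev : ∀ t : ℝ, q.eval t = 2 * p.eval t - 1 := by
    intro t
    rw [hq]
    simp
  have hqdeg : q.natDegree ≤ D := by
    rw [hq]
    calc (Polynomial.C 2 * p - Polynomial.C 1).natDegree
        ≤ max (Polynomial.C 2 * p).natDegree (Polynomial.C (1:ℝ)).natDegree :=
          Polynomial.natDegree_sub_le _ _
      _ ≤ D := by
          apply max_le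
          · exact le_trans (Polynomial.natDegree_C_mul_le _ _) hpdeg
          · rw [Polynomial.natDegree_C]; omega
  have hq0 : q.eval 0 = 1 := by
    have : ((0:ℕ):ℝ) = (0:ℝ) := by norm_num
    rw [hqev 0, ← this, hp0]
    norm_num
  have hq1 : q.eval 1 = -1 := by
    have : ((1:ℕ):ℝ) = (1:ℝ) := by norm_num
    rw [hqev 1, ← this, hp1]
    norm_num
  have hqb : ∀ k : ℕ, k ≤ S.card → |q.eval (k:ℝ)| ≤ 1 := by
    intro k hk
    obtain ⟨hl, hr⟩ := hbounds k hk
    rw [hqev, abs_le]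
    constructor <;> linarith
  have := crux D S.card hD1 q hqdeg hq0 hq1 hqb
  omega

end SensDeg

theorem stmt0 (m n : ℕ) (hm : 2 ≤ m) (hn : 1 ≤ n)
    (T : Finset ℂ) (hT : T.card = m) (f : (Fin n → ↥T) → ↥T) :
    sens T n f ≤ 2 * (m - 1) ^ 3 * (degreeF T n f) ^ 2 := by
  classical
  obtain ⟨F, hFrep, hFdeg⟩ := SensDeg.degreeF_spec T n f
  apply Finset.sup_le
  intro x _
  calc localSens T n f x
      ≤ (T.card - 1) * (Finset.univ.filter fun i : Fin n =>
          ∃ t : ↥T, f (Function.update x i t) ≠ f x).card := SensDeg.localSens_le T n f x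
    _ ≤ (m - 1) * (2 * ((m - 1) * F.totalDegree)^2) := by
        rw [hT]
        exact Nat.mul_le_mul_left _ (SensDeg.core T m n hm hT f F hFrep x)
    _ = 2 * (m - 1)^3 * (F.totalDegree)^2 := by ring
    _ = 2 * (m - 1)^3 * (degreeF T n f)^2 := by rw [hFdeg]
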